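/- Let g : ℝ → ℝ be nonnegative integrable and f : [a,b] → ℝ continuous nonnegative with f(t) ≤ A + ∫_a^t ∫_a^s g(r) f(r) dr ds for all t ∈ [a,b], A ≥ 0. Then f(t) ≤ A·exp(∫_a^t ∫_a^s g(r) dr ds) for all t ∈ [a,b]. -/

import Mathlib

open intervalIntegral Set MeasureTheory

/-- A double-integral Gronwall inequality with integrable coefficient
(special case of Bykov's theorem). -/
theorem stmt11 (a b A : ℝ) (hab : a ≤ b) (hA : 0 ≤ A)
    (g : ℝ → ℝ) (hg0 : ∀ r, 0 ≤ g r) (hgint : Integrable g)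
    (f : ℝ → ℝ) (hf : ContinuousOn f (Icc a b)) (hfpos : ∀ t ∈ Icc a b, 0 ≤ f t)
    (hineq : ∀ t ∈ Icc a b, f t ≤ A + ∫ s in a..t, ∫ r in a..s, g r * f r) :
    ∀ t ∈ Icc a b, f t ≤ A * Real.exp (∫ s in a..t, ∫ r in a..s, g r) := by
  -- the continuous bounded extension of `f`
  have hFmem : ∀ x, ((projIcc a b hab x : Icc a b) : ℝ) ∈ Icc a b := fun x =>
    (projIcc a b hab x).2
  set F : ℝ → ℝ := fun x => f (projIcc a b hab x) with hFdef
  have hFcont : Continuous F :=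
    hf.comp_continuous (continuous_subtype_val.comp continuous_projIcc) hFmem
  have hFeq : ∀ x ∈ Icc a b, F x = f x := fun x hx => by
    simp only [hFdef, projIcc_of_mem hab hx]
  have hF0 : ∀ x, 0 ≤ F x := fun x => hfpos _ (hFmem x)
  obtain ⟨C, hC⟩ : ∃ C, ∀ x ∈ Icc a b, ‖f x‖ ≤ C :=
    isCompact_Icc.exists_bound_of_continuousOn hf
  have hFbdd : ∀ x, ‖F x‖ ≤ C := fun x => hC _ (hFmem x)
  have hgF : Integrable (fun r => g r * F r) := by
    have h := hgint.bdd_mul hFcont.aestronglyMeasurable (Filter.Eventually.of_forall hFbdd)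
    exact h.congr (Filter.Eventually.of_forall fun x => mul_comm _ _)
  -- the primitives
  set q : ℝ → ℝ := fun s => ∫ r in a..s, g r * F r with hqdef
  set φ : ℝ → ℝ := fun s => ∫ r in a..s, g r with hφdef
  have hqcont : Continuous q := hgF.continuous_primitive a
  have hφcont : Continuous φ := hgint.continuous_primitive a
  set ψ : ℝ → ℝ := fun t => A + ∫ s in a..t, q s with hψdef
  set Φ : ℝ → ℝ := fun t => ∫ s in a..t, φ s with hΦdef
  have hψd : ∀ t, HasDerivAt ψ (q t) t := fun t =>
    (intervalIntegral.integral_hasDerivAt_right (hqcont.intervalIntegrable a t)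
      (hqcont.stronglyMeasurable.stronglyMeasurableAtFilter) hqcont.continuousAt).const_add A
  have hΦd : ∀ t, HasDerivAt Φ (φ t) t := fun t =>
    intervalIntegral.integral_hasDerivAt_right (hφcont.intervalIntegrable a t)
      (hφcont.stronglyMeasurable.stronglyMeasurableAtFilter) hφcont.continuousAt
  -- the hypothesis in terms of ψ
  have key : ∀ t ∈ Icc a b, f t ≤ ψ t := by
    intro t ht
    have h1 := hineq t ht
    have hrw : (∫ s in a..t, ∫ r in a..s, g r * f r) = ∫ s in a..t, q s := by
      apply intervalIntegral.integral_congr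
      intro s hs
      rw [uIcc_of_le ht.1] at hs
      apply intervalIntegral.integral_congr
      intro r hr
      rw [uIcc_of_le hs.1] at hr
      have hr' : r ∈ Icc a b := ⟨hr.1, hr.2.trans (hs.2.trans ht.2)⟩
      show g r * f r = g r * F r
      rw [hFeq r hr']
    rw [hψdef]
    dsimp only
    rw [← hrw]
    exact h1
  -- ψ is monotone on [a,b]
  have hq0 : ∀ s, a ≤ s → 0 ≤ q s := fun s hs =>
    intervalIntegral.integral_nonneg hs fun r _ => mul_nonneg (hg0 r) (hF0 r)
  have hψmono : MonotoneOn ψ (Icc a b) := by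
    apply monotoneOn_of_deriv_nonneg (convex_Icc a b)
      (fun t _ => (hψd t).continuousAt.continuousWithinAt)
      (fun t ht => (hψd t).differentiableAt.differentiableWithinAt)
    intro t ht
    rw [interior_Icc] at ht
    rw [(hψd t).deriv]
    exact hq0 t ht.1.le
  -- the key differential inequality
  have hkey : ∀ t ∈ Icc a b, q t ≤ ψ t * φ t := by
    intro t ht
    have h1 : ∀ r ∈ Icc a t, g r * F r ≤ g r * ψ t := by
      intro r hr
      have hr' : r ∈ Icc a b := ⟨hr.1, hr.2.trans ht.2⟩
      have hFψ : F r ≤ ψ t := by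
        rw [hFeq r hr']
        calc f r ≤ ψ r := key r hr'
          _ ≤ ψ t := hψmono hr' ht hr.2
      exact mul_le_mul_of_nonneg_left hFψ (hg0 r)
    calc q t ≤ ∫ r in a..t, g r * ψ t :=
          intervalIntegral.integral_mono_on ht.1 hgF.intervalIntegrable
            ((hgint.mul_const _).intervalIntegrable) h1
      _ = (∫ r in a..t, g r) * ψ t := by rw [intervalIntegral.integral_mul_const]
      _ = ψ t * φ t := mul_comm _ _
  -- the auxiliary function ψ * exp (-Φ) is antitone on [a,b]
  have hhd : ∀ t, HasDerivAt (fun t => ψ t * Real.exp (-Φ t))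
      (q t * Real.exp (-Φ t) + ψ t * (Real.exp (-Φ t) * -(φ t))) t := fun t =>
    (hψd t).mul ((hΦd t).neg.exp)
  have hanti : AntitoneOn (fun t => ψ t * Real.exp (-Φ t)) (Icc a b) := by
    apply antitoneOn_of_deriv_nonpos (convex_Icc a b)
      (fun t _ => (hhd t).continuousAt.continuousWithinAt)
      (fun t ht => (hhd t).differentiableAt.differentiableWithinAt)
    intro t ht
    rw [interior_Icc] at ht
    rw [(hhd t).deriv]
    have h1 := hkey t (Ioo_subset_Icc_self ht)
    have hexp : (0:ℝ) < Real.exp (-Φ t) := Real.exp_pos _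
    nlinarith [h1, hexp]
  -- conclusion
  intro t ht
  have h1 := hanti (left_mem_Icc.2 hab) ht ht.1
  have hψa : ψ a = A := by simp [hψdef]
  have hΦa : Φ a = 0 := by simp [hΦdef]
  dsimp only at h1
  rw [hψa, hΦa, neg_zero, Real.exp_zero, mul_one] at h1
  have h2 : ψ t ≤ A * Real.exp (Φ t) := by
    have h3 : ψ t * Real.exp (-Φ t) * Real.exp (Φ t) ≤ A * Real.exp (Φ t) :=
      mul_le_mul_of_nonneg_right h1 (Real.exp_pos _).le
    rwa [mul_assoc, ← Real.exp_add, neg_add_cancel, Real.exp_zero, mul_one] at h3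
  show f t ≤ A * Real.exp (Φ t)
  exact (key t ht).trans h2
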